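/- In an infinite word over a pushdown alphabet with an infinite MAP ν starting at position i_0, every position i > i_0 is either a position of ν or a position where p_∞ fails (i.e., the MAP through i starts at some j > 0 whose predecessor is a matched call). -/

import Mathlib

/-- The type of a position in a word over a pushdown alphabet. -/
inductive SymType : Type
  | call | ret | int
deriving DecidableEq

/-- The factor strictly between `i` and `j` is well matched:
calls and returns balance out, and no prefix has more returns than calls. -/
def wellMatched (kind : ℕ → SymType) (i j : ℕ) : Prop :=
  (((Finset.Ioo i j).filter fun k => kind k = SymType.call).card =
   ((Finset.Ioo i j).filter fun k => kind k = SymType.ret).card) ∧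
  ∀ m ∈ Finset.Ioo i j,
    ((Finset.Ioc i m).filter fun k => kind k = SymType.ret).card ≤
    ((Finset.Ioc i m).filter fun k => kind k = SymType.call).card

/-- `j` is the matching return of the call `i`: the least return `j > i`
such that the factor strictly between `i` and `j` is well matched. -/
def MatchRet (kind : ℕ → SymType) (i j : ℕ) : Prop :=
  kind i = SymType.call ∧ i < j ∧ kind j = SymType.ret ∧ wellMatched kind i j ∧
  ∀ j', i < j' → j' < j → ¬ (kind j' = SymType.ret ∧ wellMatched kind i j')

/-- The abstract successor relation: a matched call maps to its matching
return; any non-call position maps to the next position provided it is not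
a return. Unmatched calls (and positions followed by a return) have no
abstract successor. -/
def absSucc (kind : ℕ → SymType) (i j : ℕ) : Prop :=
  (kind i = SymType.call ∧ MatchRet kind i j) ∨
  (kind i ≠ SymType.call ∧ j = i + 1 ∧ kind (i + 1) ≠ SymType.ret)

/-- `j` is reachable from `i` along abstract successors. -/
def reach (kind : ℕ → SymType) : ℕ → ℕ → Prop := Relation.ReflTransGen (absSucc kind)

/-- `i` and `j` lie on the same maximal abstract path (MAP). -/
def onSameMAP (kind : ℕ → SymType) (i j : ℕ) : Prop := reach kind i j ∨ reach kind j i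

/-- `s` is the initial position of a MAP: nothing maps to it. -/
def isMAPStart (kind : ℕ → SymType) (s : ℕ) : Prop := ∀ k, ¬ absSucc kind k s

/-- `s` is the initial position of the MAP visiting `i`. -/
def startsMAPOf (kind : ℕ → SymType) (s i : ℕ) : Prop := isMAPStart kind s ∧ reach kind s i

/-- The MAP visiting `i` is infinite (has no last position). -/
def infMAP (kind : ℕ → SymType) (i : ℕ) : Prop := ∀ j, reach kind i j → ∃ k, absSucc kind j k

/-- `p_∞` holds at `i` iff the MAP visiting `i` does not start at a position
`s > 0` such that `s - 1` is a call having a matching return. -/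
def pInf (kind : ℕ → SymType) (i : ℕ) : Prop :=
  ¬ ∃ s, startsMAPOf kind s i ∧ 0 < s ∧ kind (s - 1) = SymType.call ∧
    ∃ r, MatchRet kind (s - 1) r
/-- height function -/
def hgt (kind : ℕ → SymType) (a m : ℕ) : ℤ :=
  (((Finset.Ioc a m).filter fun k => kind k = SymType.call).card : ℤ) -
  (((Finset.Ioc a m).filter fun k => kind k = SymType.ret).card : ℤ)

lemma hgt_self (kind : ℕ → SymType) (a : ℕ) : hgt kind a a = 0 := by
  simp [hgt]

lemma hgt_add (kind : ℕ → SymType) {a c m : ℕ} (h1 : a ≤ c) (h2 : c ≤ m) :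
    hgt kind a m = hgt kind a c + hgt kind c m := by
  have hU : Finset.Ioc a m = Finset.Ioc a c ∪ Finset.Ioc c m := by
    ext x; simp only [Finset.mem_Ioc, Finset.mem_union]; omega
  have hd : Disjoint (Finset.Ioc a c) (Finset.Ioc c m) := by
    rw [Finset.disjoint_left]
    intro x hx hx'
    simp only [Finset.mem_Ioc] at hx hx'
    omega
  unfold hgt
  rw [hU, Finset.filter_union, Finset.filter_union,
    Finset.card_union_of_disjoint (hd.mono (Finset.filter_subset _ _) (Finset.filter_subset _ _)),
    Finset.card_union_of_disjoint (hd.mono (Finset.filter_subset _ _) (Finset.filter_subset _ _))]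
  push_cast
  ring

lemma hgt_single (kind : ℕ → SymType) (m : ℕ) :
    hgt kind m (m+1) = if kind (m+1) = SymType.call then 1
      else if kind (m+1) = SymType.ret then -1 else 0 := by
  have hs : Finset.Ioc m (m+1) = {m+1} := by
    ext x; simp only [Finset.mem_Ioc, Finset.mem_singleton]; omega
  unfold hgt
  rw [hs]
  rcases h : kind (m+1) <;> simp [Finset.filter_singleton, h]

lemma hgt_succ (kind : ℕ → SymType) {a m : ℕ} (h : a ≤ m) :
    hgt kind a (m+1) = hgt kind a m + (if kind (m+1) = SymType.call then 1
      else if kind (m+1) = SymType.ret then -1 else 0) := by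
  rw [hgt_add kind h (Nat.le_succ m), hgt_single]

lemma hgt_step_le (kind : ℕ → SymType) {a m : ℕ} (h : a ≤ m) :
    hgt kind a (m+1) ≤ hgt kind a m + 1 := by
  rw [hgt_succ kind h]; split_ifs <;> omega

lemma hgt_step_ge (kind : ℕ → SymType) {a m : ℕ} (h : a ≤ m) :
    hgt kind a m - 1 ≤ hgt kind a (m+1) := by
  rw [hgt_succ kind h]; split_ifs <;> omega

lemma call_step (kind : ℕ → SymType) {a m : ℕ} (h : a ≤ m)
    (hc : kind (m+1) = SymType.call) : hgt kind a (m+1) = hgt kind a m + 1 := by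
  rw [hgt_succ kind h, hc]; simp

lemma ret_step (kind : ℕ → SymType) {a m : ℕ} (h : a ≤ m)
    (hc : kind (m+1) = SymType.ret) : hgt kind a (m+1) = hgt kind a m - 1 := by
  rw [hgt_succ kind h, hc]; simp; ring

lemma kind_of_up (kind : ℕ → SymType) {a m : ℕ} (h : a ≤ m)
    (he : hgt kind a m < hgt kind a (m+1)) :
    kind (m+1) = SymType.call ∧ hgt kind a (m+1) = hgt kind a m + 1 := by
  rw [hgt_succ kind h] at he ⊢
  rcases hk : kind (m+1) <;> simp_all <;> omega

lemma kind_of_down (kind : ℕ → SymType) {a m : ℕ} (h : a ≤ m)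
    (he : hgt kind a (m+1) < hgt kind a m) :
    kind (m+1) = SymType.ret ∧ hgt kind a (m+1) = hgt kind a m - 1 := by
  rw [hgt_succ kind h] at he ⊢
  rcases hk : kind (m+1) <;> simp_all <;> omega

lemma wm_balance {kind : ℕ → SymType} {a b : ℕ} (h : wellMatched kind a b) :
    hgt kind a (b-1) = 0 := by
  have hIoo : Finset.Ioo a b = Finset.Ioc a (b-1) := by
    ext x; simp only [Finset.mem_Ioo, Finset.mem_Ioc]; omega
  have h1 := h.1
  rw [hIoo] at h1
  unfold hgt
  rw [h1]; ring

lemma wm_prefix {kind : ℕ → SymType} {a b : ℕ} (h : wellMatched kind a b)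
    {m : ℕ} (h1 : a < m) (h2 : m < b) : 0 ≤ hgt kind a m := by
  have := h.2 m (Finset.mem_Ioo.mpr ⟨h1, h2⟩)
  unfold hgt
  omega

lemma wm_of {kind : ℕ → SymType} {a b : ℕ} (h1 : hgt kind a (b-1) = 0)
    (h2 : ∀ m, a < m → m < b → 0 ≤ hgt kind a m) : wellMatched kind a b := by
  have hIoo : Finset.Ioo a b = Finset.Ioc a (b-1) := by
    ext x; simp only [Finset.mem_Ioo, Finset.mem_Ioc]; omega
  constructor
  · rw [hIoo]
    unfold hgt at h1
    omega
  · intro m hm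
    rw [Finset.mem_Ioo] at hm
    have := h2 m hm.1 hm.2
    unfold hgt at this
    omega

/-- (B) every return strictly inside a well-matched factor has a matching call. -/
lemma exists_match_of_inner_ret (kind : ℕ → SymType) {j j' p : ℕ}
    (hw : wellMatched kind j j') (h1 : j < p) (h2 : p < j')
    (hp : kind p = SymType.ret) : ∃ c, MatchRet kind c p := by
  have hp0 : 0 ≤ hgt kind j p := wm_prefix hw h1 h2
  have hp1 : p - 1 + 1 = p := by omega
  have hjp1 : j ≤ p - 1 := by omega
  have hpred : hgt kind j (p-1) = hgt kind j p + 1 := by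
    have := ret_step kind hjp1 (by rwa [hp1])
    rw [hp1] at this; omega
  set P : ℕ → Prop := fun m => j ≤ m ∧ hgt kind j m ≤ hgt kind j p with hP
  have : DecidablePred P := fun m => instDecidableAnd
  set K := Nat.findGreatest P (p-1) with hK
  have hKspec : P K := Nat.findGreatest_spec (m := j) hjp1 ⟨le_refl j, by rw [hgt_self]; omega⟩
  have hKle : K ≤ p - 1 := Nat.findGreatest_le _
  have hgreat : ∀ m, K < m → m ≤ p - 1 → hgt kind j p < hgt kind j m := by
    intro m hm1 hm2
    have hng := Nat.findGreatest_is_greatest hm1 hm2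
    simp only [hP, not_and, not_le] at hng
    exact hng (le_trans hKspec.1 (le_of_lt hm1))
  have hKne : K ≠ p - 1 := by
    intro he
    have := hKspec.2
    rw [he, hpred] at this
    omega
  have hK1 : K + 1 ≤ p - 1 := by omega
  have hup : hgt kind j p < hgt kind j (K+1) := hgreat _ (Nat.lt_succ_self K) hK1
  have hstep := hgt_step_le kind hKspec.1
  have hcall : kind (K+1) = SymType.call ∧ hgt kind j (K+1) = hgt kind j K + 1 :=
    kind_of_up kind hKspec.1 (by omega)
  have hKeq : hgt kind j K = hgt kind j p := by omega
  have hc1 : hgt kind j (K+1) = hgt kind j p + 1 := by omega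
  set c := K + 1 with hc
  have hcp : c < p := by omega
  have hinner : ∀ m, c ≤ m → m < p → hgt kind j m = hgt kind j c + hgt kind c m := by
    intro m hm1 hm2
    exact hgt_add kind (by omega) hm1
  refine ⟨c, hcall.1, hcp, hp, ?_, ?_⟩
  · refine wm_of ?_ ?_
    · have := hgt_add kind (show j ≤ c by omega) (show c ≤ p - 1 by omega)
      rw [hpred, hc1] at this
      omega
    · intro m hm1 hm2
      have h3 := hgt_add kind (show j ≤ c by omega) (le_of_lt hm1)
      have h4 := hgreat m (by omega) (by omega)
      omega
  · intro p' hp'1 hp'2 ⟨hpr, hwm'⟩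
    have hb := wm_balance hwm'
    have h5 := hgt_add kind (show j ≤ c by omega) (show c ≤ p' - 1 by omega)
    rw [hb] at h5
    have hps : p' - 1 + 1 = p' := by omega
    have h6 : hgt kind j p' = hgt kind j (p'-1) - 1 := by
      have := ret_step kind (show j ≤ p' - 1 by omega) (by rwa [hps])
      rw [hps] at this; omega
    have h7 := hgreat p' (by omega) (by omega)
    omega

/-- (B') every call strictly inside a well-matched factor has a matching return. -/
lemma exists_match_of_inner_call (kind : ℕ → SymType) {j j' c : ℕ}
    (hw : wellMatched kind j j') (h1 : j < c) (h2 : c < j')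
    (hc : kind c = SymType.call) : ∃ r, MatchRet kind c r := by
  have hc1 : c - 1 + 1 = c := by omega
  have hjc : j ≤ c - 1 := by omega
  have hcstep : hgt kind j c = hgt kind j (c-1) + 1 := by
    have := call_step kind hjc (by rwa [hc1])
    rw [hc1] at this; omega
  have hc0 : 0 ≤ hgt kind j (c-1) := by
    rcases eq_or_lt_of_le hjc with he | hlt
    · rw [← he, hgt_self]
    · exact wm_prefix hw hlt (by omega)
  have hcge : 1 ≤ hgt kind j c := by omega
  have hbal : hgt kind j (j'-1) = 0 := wm_balance hw
  have hcne : c < j' - 1 := by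
    rcases (show c ≤ j' - 1 by omega).lt_or_eq with h | h
    · exact h
    · rw [h] at hcge; omega
  have hex : ∃ n, c < n ∧ n ≤ j' - 1 ∧ hgt kind j n ≤ hgt kind j c - 1 :=
    ⟨j'-1, hcne, le_refl _, by omega⟩
  have hspec := Nat.find_spec hex
  have hminp : ∀ m, m < Nat.find hex →
      ¬(c < m ∧ m ≤ j' - 1 ∧ hgt kind j m ≤ hgt kind j c - 1) :=
    fun m hm => Nat.find_min hex hm
  set r := Nat.find hex with hrdef
  obtain ⟨hcr, hrj, hrle⟩ := hspec
  have hmin : ∀ m, c ≤ m → m < r → hgt kind j c ≤ hgt kind j m := by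
    intro m hm1 hm2
    rcases eq_or_lt_of_le hm1 with he | hlt
    · rw [← he]
    · have := hminp m hm2
      simp only [not_and, not_le] at this
      have := this hlt (by omega)
      omega
  have hr1 : r - 1 + 1 = r := by omega
  have hpre : hgt kind j c ≤ hgt kind j (r-1) := hmin _ (by omega) (by omega)
  have hstep := hgt_step_ge kind (show j ≤ r - 1 by omega)
  rw [hr1] at hstep
  have hdown : kind r = SymType.ret ∧ hgt kind j r = hgt kind j (r-1) - 1 := by
    have := kind_of_down kind (show j ≤ r - 1 by omega) (by rw [hr1]; omega)
    rwa [hr1] at this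
  have hreq : hgt kind j r = hgt kind j c - 1 := by omega
  have hr1eq : hgt kind j (r-1) = hgt kind j c := by omega
  refine ⟨r, hc, hcr, hdown.1, ?_, ?_⟩
  · refine wm_of ?_ ?_
    · have := hgt_add kind (le_of_lt h1) (show c ≤ r - 1 by omega)
      omega
    · intro m hm1 hm2
      have := hgt_add kind (le_of_lt h1) (le_of_lt hm1)
      have := hmin m (le_of_lt hm1) hm2
      omega
  · intro r' hr'1 hr'2 ⟨hrr, hwm'⟩
    have hb := wm_balance hwm'
    have h5 := hgt_add kind (le_of_lt h1) (show c ≤ r' - 1 by omega)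
    rw [hb] at h5
    have hps : r' - 1 + 1 = r' := by omega
    have h6 : hgt kind j r' = hgt kind j (r'-1) - 1 := by
      have := ret_step kind (show j ≤ r' - 1 by omega) (by rwa [hps])
      rw [hps] at this; omega
    have h7 := hmin r' (le_of_lt hr'1) hr'2
    omega

/-- (D) matched pairs do not cross. -/
lemma no_crossing (kind : ℕ → SymType) {a b j j' : ℕ}
    (h1 : MatchRet kind a b) (h2 : MatchRet kind j j')
    (hab : a < j) (hjb : j < b) (hbj' : b < j') : False := by
  obtain ⟨-, -, -, hwab, -⟩ := h1
  obtain ⟨hjc, -, -, hwjj', -⟩ := h2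
  have hj1 : j - 1 + 1 = j := by omega
  have hgj : hgt kind a j = hgt kind a (j-1) + 1 := by
    have := call_step kind (show a ≤ j - 1 by omega) (by rwa [hj1])
    rw [hj1] at this; omega
  have hgj0 : 0 ≤ hgt kind a (j-1) := by
    rcases eq_or_lt_of_le (show a ≤ j - 1 by omega) with he | hlt
    · rw [← he, hgt_self]
    · exact wm_prefix hwab hlt (by omega)
  have hbal : hgt kind a (b-1) = 0 := wm_balance hwab
  rcases eq_or_lt_of_le (show j ≤ b - 1 by omega) with he | hlt
  · rw [← he] at hbal; omega
  · have hge : 0 ≤ hgt kind j (b-1) := wm_prefix hwjj' hlt (by omega)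
    have := hgt_add kind (le_of_lt hab) (show j ≤ b - 1 by omega)
    omega

lemma matchRet_unique (kind : ℕ → SymType) {i j j' : ℕ}
    (h1 : MatchRet kind i j) (h2 : MatchRet kind i j') : j = j' := by
  by_contra hne
  rcases lt_or_gt_of_ne hne with h | h
  · exact h2.2.2.2.2 j h1.2.1 h ⟨h1.2.2.1, h1.2.2.2.1⟩
  · exact h1.2.2.2.2 j' h2.2.1 h ⟨h2.2.2.1, h2.2.2.2.1⟩

lemma absSucc_lt (kind : ℕ → SymType) {k j : ℕ} (h : absSucc kind k j) : k < j := by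
  rcases h with ⟨-, -, h, -⟩ | ⟨-, h, -⟩ <;> omega

lemma reach_le (kind : ℕ → SymType) {x y : ℕ} (h : reach kind x y) : x ≤ y := by
  induction h with
  | refl => exact le_refl x
  | tail h1 h2 ih => exact ih.trans (absSucc_lt kind h2).le

lemma exists_start (kind : ℕ → SymType) (i : ℕ) : ∃ s, startsMAPOf kind s i := by
  induction i using Nat.strong_induction_on with
  | _ i ih =>
    by_cases h : isMAPStart kind i
    · exact ⟨i, h, Relation.ReflTransGen.refl⟩
    · unfold isMAPStart at h
      push_neg at h
      obtain ⟨k, hk⟩ := h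
      obtain ⟨s, hs1, hs2⟩ := ih k (absSucc_lt kind hk)
      exact ⟨s, hs1, hs2.tail hk⟩

lemma unbounded (kind : ℕ → SymType) {i0 : ℕ} (hinf : infMAP kind i0) :
    ∀ n, ∃ j, reach kind i0 j ∧ n ≤ j := by
  intro n
  induction n with
  | zero => exact ⟨i0, Relation.ReflTransGen.refl, Nat.zero_le _⟩
  | succ n ih =>
    obtain ⟨j, hj, hn⟩ := ih
    obtain ⟨k, hk⟩ := hinf j hj
    exact ⟨k, hj.tail hk, by have := absSucc_lt kind hk; omega⟩

lemma crossing (kind : ℕ → SymType) {s x t : ℕ} (h : reach kind s t)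
    (hsx : s < x) (hxt : x ≤ t) :
    ∃ a b, reach kind s a ∧ absSucc kind a b ∧ a < x ∧ x ≤ b ∧ b ≤ t := by
  induction h with
  | refl => omega
  | @tail b' c h1 h2 ih =>
    by_cases hb : x ≤ b'
    · obtain ⟨a, b, ha1, ha2, ha3, ha4, ha5⟩ := ih hb
      exact ⟨a, b, ha1, ha2, ha3, ha4, ha5.trans (absSucc_lt kind h2).le⟩
    · exact ⟨b', c, h1, h2, by omega, hxt, le_refl c⟩

/-- if an infinite MAP starts at `i_0`, every position `i > i_0`
is either on that MAP or a position where `p_∞` fails. -/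
theorem positions_after_infinite_MAP_start (kind : ℕ → SymType) (i0 : ℕ)
    (hstart : isMAPStart kind i0) (hinf : infMAP kind i0)
    (i : ℕ) (hi : i0 < i) :
    reach kind i0 i ∨ ¬ pInf kind i := by
  by_cases hreach : reach kind i0 i
  · exact Or.inl hreach
  right
  obtain ⟨t, ht, hit⟩ := unbounded kind hinf i
  obtain ⟨a, b, hra, hab, hai, hib, hbt⟩ := crossing kind ht hi hit
  have hib' : i < b := by
    rcases eq_or_lt_of_le hib with he | h
    · exact absurd (he ▸ (hra.tail hab)) hreach
    · exact h
  have hM : MatchRet kind a b := by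
    rcases hab with ⟨-, hM⟩ | ⟨-, hb1, -⟩
    · exact hM
    · omega
  have hwm := hM.2.2.2.1
  obtain ⟨s, hsS, hsR⟩ := exists_start kind i
  have hsle : s ≤ i := reach_le kind hsR
  have has : a < s := by
    by_contra hcon
    push_neg at hcon
    obtain ⟨a2, b2, hra2, hab2, ha2, hb2, hb2i⟩ :=
      crossing kind hsR (show s < a+1 by omega) (show a+1 ≤ i by omega)
    rcases hab2 with ⟨hc2, hM2⟩ | ⟨hnc, hb21, -⟩
    · rcases eq_or_lt_of_le (show a2 ≤ a by omega) with he | hlt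
      · have := matchRet_unique kind (he ▸ hM2) hM
        omega
      · exact no_crossing kind hM2 hM hlt (by omega) (by omega)
    · have ha2a : a2 = a := by omega
      exact hnc (ha2a ▸ hM.1)
  have hs0 : 0 < s := by omega
  have hsnr : kind s ≠ SymType.ret := by
    intro hret
    obtain ⟨c, hMc⟩ := exists_match_of_inner_ret kind hwm has (by omega) hret
    exact hsS c (Or.inl ⟨hMc.1, hMc⟩)
  have hscall : kind (s-1) = SymType.call := by
    by_contra hnc
    exact hsS (s-1) (Or.inr ⟨hnc, by omega, by
      rw [show s - 1 + 1 = s from by omega]; exact hsnr⟩)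
  have hrex : ∃ r, MatchRet kind (s-1) r := by
    rcases eq_or_lt_of_le (show a ≤ s - 1 by omega) with he | hlt
    · exact ⟨b, he ▸ hM⟩
    · exact exists_match_of_inner_call kind hwm hlt (by omega) hscall
  intro hp
  exact hp ⟨s, ⟨hsS, hsR⟩, hs0, hscall, hrex⟩
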